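/- The factored clique-replacement functor R := S_M ∘ del ∘ N★ ∘ N_{H⁺} from set-system hypergraphs to simple graphs acts as follows: VR(G) = V(G), ER(G) = {{v,w} : there exists e ∈ E(G) with {v,w} ⊆ ε_G(e)}, and R(φ) = V(φ) on homomorphisms. -/

import Mathlib

/-- A set-system hypergraph. -/
structure SSHyp : Type 1 where
  E : Type
  V : Type
  eps : E → Set V

/-- A traditional set-system hypergraph homomorphism. -/
structure TradHom (G H : SSHyp) where
  fe : G.E → H.E
  fv : G.V → H.V
  comm : ∀ e, H.eps (fe e) = fv '' G.eps e

/-- A weak set-system hypergraph homomorphism. -/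
structure WeakHom (G H : SSHyp) where
  fe : G.E → H.E
  fv : G.V → H.V
  sub : ∀ e, fv '' G.eps e ⊆ H.eps (fe e)

/-- The inclusion `N_{H⁺} : H → H⁺`. -/
def TradHom.toWeak {G H : SSHyp} (φ : TradHom G H) : WeakHom G H :=
  ⟨φ.fe, φ.fv, fun e => le_of_eq (φ.comm e).symm⟩

/-- A set system (a simple graph when all edges have cardinality 1 or 2). -/
structure SetSys : Type 1 where
  V : Type
  edges : Set (Set V)

/-- A set-system (graph) homomorphism. -/
def IsSSHom (G H : SetSys) (f : G.V → H.V) : Prop :=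
  ∀ A ∈ G.edges, f '' A ∈ H.edges

/-- `N★`: simplicial replacement. -/
def Nstar (G : SSHyp) : SSHyp :=
  ⟨{p : G.E × Set G.V // p.2 ⊆ G.eps p.1}, G.V, fun p => p.val.2⟩

/-- The action of `N★` on weak homomorphisms (yielding traditional homomorphisms). -/
def NstarHom {G H : SSHyp} (φ : WeakHom G H) : TradHom (Nstar G) (Nstar H) :=
  ⟨fun p => ⟨(φ.fe p.val.1, φ.fv '' p.val.2),
      (Set.image_mono p.property).trans (φ.sub _)⟩,
    φ.fv, fun p => rfl⟩

/-- `del`: deletion of all edges not of cardinality 1 or 2. -/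
def delM (M : SSHyp) : SSHyp :=
  ⟨{e : M.E // ∃ v w, M.eps e = {v, w}}, M.V, fun e => M.eps e.val⟩

/-- The action of `del` on traditional homomorphisms. -/
def delMHom {M M' : SSHyp} (ψ : TradHom M M') : TradHom (delM M) (delM M') :=
  ⟨fun e => ⟨ψ.fe e.val, by
      obtain ⟨v, w, h⟩ := e.property
      exact ⟨ψ.fv v, ψ.fv w, by
        rw [ψ.comm, h, Set.image_insert_eq, Set.image_singleton]⟩⟩,
    ψ.fv, fun e => ψ.comm e.val⟩

/-- `S_M`: multigraph simplification to a set system (simple graph). -/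
def SM (M : SSHyp) : SetSys :=
  ⟨M.V, {A | ∃ e, A = M.eps e}⟩

/-- The action of `S_M` on traditional homomorphisms. -/
def SMHom {M M' : SSHyp} (ψ : TradHom M M') :
    {f : (SM M).V → (SM M').V // IsSSHom (SM M) (SM M') f} :=
  ⟨ψ.fv, fun A hA => by
    obtain ⟨e, rfl⟩ := hA
    exact ⟨ψ.fe e, (ψ.comm e).symm⟩⟩

/-- The factored clique replacement `R := S_M ∘ del ∘ N★ ∘ N_{H⁺}` on objects. -/
def Robj (G : SSHyp) : SetSys := SM (delM (Nstar G))

/-- The factored clique replacement on traditional homomorphisms. -/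
def Rhom {G H : SSHyp} (φ : TradHom G H) :
    {f : (Robj G).V → (Robj H).V // IsSSHom (Robj G) (Robj H) f} :=
  SMHom (delMHom (NstarHom φ.toWeak))

/-- Action of the factored clique replacement functor `R`: vertices are unchanged,
edges are the pairs `{v,w}` contained in a common edge of `G`, and the action on a
homomorphism `φ` is its vertex function `V(φ)`. -/
theorem factored_clique_replacement_action :
    (∀ G : SSHyp, (Robj G).V = G.V) ∧
    (∀ G : SSHyp, (Robj G).edges =
      {A : Set G.V | ∃ v w e, A = {v, w} ∧ v ∈ G.eps e ∧ w ∈ G.eps e}) ∧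
    (∀ (G H : SSHyp) (φ : TradHom G H), (Rhom φ).val = φ.fv) := by
  refine ⟨fun G => rfl, fun G => ?_, fun G H φ => rfl⟩
  ext A
  constructor
  · rintro ⟨⟨⟨⟨e, B⟩, hB⟩, v, w, hvw⟩, rfl⟩
    simp only [Robj, SM, delM, Nstar] at hB hvw ⊢
    exact ⟨v, w, e, hvw, hB (by rw [hvw]; exact Or.inl rfl), hB (by rw [hvw]; exact Or.inr rfl)⟩
  · rintro ⟨v, w, e, rfl, hv, hw⟩
    refine ⟨⟨⟨⟨e, {v, w}⟩, ?_⟩, ⟨v, w, rfl⟩⟩, rfl⟩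
    intro x hx
    rcases hx with h | h <;> simp_all
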